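/- Let f : ℝ^n → ℝ be a continuous convex function, and let T and C be nonempty closed convex subsets of ℝ^n with T ∩ C nonempty. Suppose z̃ minimizes f over T and the minimum of f over T ∩ C is attained at some point. If z̃ ∉ C, then there exists a point z* on the boundary of C with z* ∈ T such that z* minimizes f over T ∩ C. -/
import Mathlib

open scoped RealInnerProductSpace

lemma preconn_inter_frontier {X : Type*} [TopologicalSpace X] {s C : Set X}
    (hs : IsPreconnected s) (h1 : (s ∩ C).Nonempty) (h2 : (s \ C).Nonempty) :
    (s ∩ frontier C).Nonempty := by
  by_contra h
  rw [Set.not_nonempty_iff_eq_empty] at h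
  have hmemint : ∀ x ∈ s, x ∈ closure C → x ∈ interior C := by
    intro x hx hxc
    by_contra hxi
    exact (Set.eq_empty_iff_forall_notMem.mp h x) ⟨hx, hxc, hxi⟩
  have hcover : s ⊆ interior C ∪ (closure C)ᶜ := by
    intro x hx
    by_cases hxc : x ∈ closure C
    · exact Or.inl (hmemint x hx hxc)
    · exact Or.inr hxc
  obtain ⟨x, hxs, hxC⟩ := h1
  obtain ⟨y, hys, hyC⟩ := h2
  have := hs (interior C) (closure C)ᶜ isOpen_interior isClosed_closure.isOpen_compl hcover
    ⟨x, hxs, hmemint x hxs (subset_closure hxC)⟩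
    ⟨y, hys, fun hy => hyC (interior_subset (hmemint y hys hy))⟩
  obtain ⟨z, _, hz1, hz2⟩ := this
  exact hz2 (subset_closure (interior_subset hz1))

/-- If z̃ minimizes a continuous convex f over T, the minimum over T ∩ C is
attained, and z̃ ∉ C, then some minimizer of f over T ∩ C lies in T ∩ frontier C. -/
theorem stmt1 {n : ℕ} (f : EuclideanSpace ℝ (Fin n) → ℝ)
    (hf_cont : Continuous f) (hf_conv : ConvexOn ℝ Set.univ f)
    (T C : Set (EuclideanSpace ℝ (Fin n)))
    (hT_ne : T.Nonempty) (hT_closed : IsClosed T) (hT_conv : Convex ℝ T)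
    (hC_ne : C.Nonempty) (hC_closed : IsClosed C) (hC_conv : Convex ℝ C)
    (hTC : (T ∩ C).Nonempty)
    (ztilde : EuclideanSpace ℝ (Fin n)) (hz_mem : ztilde ∈ T)
    (hz_min : ∀ z ∈ T, f ztilde ≤ f z)
    (h_attained : ∃ w ∈ T ∩ C, ∀ z ∈ T ∩ C, f w ≤ f z)
    (hzC : ztilde ∉ C) :
    ∃ zstar, zstar ∈ T ∧ zstar ∈ frontier C ∧ ∀ z ∈ T ∩ C, f zstar ≤ f z := by
  obtain ⟨w, ⟨hwT, hwC⟩, hwmin⟩ := h_attained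
  -- the segment from w to ztilde meets frontier C
  have hseg : IsPreconnected (segment ℝ w ztilde) :=
    (convex_segment w ztilde).isPreconnected
  obtain ⟨zstar, hzseg, hzfr⟩ := preconn_inter_frontier hseg
    ⟨w, left_mem_segment ℝ w ztilde, hwC⟩
    ⟨ztilde, right_mem_segment ℝ w ztilde, hzC⟩
  have hzT : zstar ∈ T := hT_conv.segment_subset hwT hz_mem hzseg
  have hzC' : zstar ∈ C := by
    have := hzfr.1
    rwa [hC_closed.closure_eq] at this
  refine ⟨zstar, hzT, hzfr, fun z hz => ?_⟩
  have hle : f zstar ≤ max (f w) (f ztilde) := by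
    obtain ⟨a, b, ha, hb, hab, rfl⟩ := hzseg
    calc f (a • w + b • ztilde) ≤ a * f w + b * f ztilde :=
          hf_conv.2 (Set.mem_univ w) (Set.mem_univ ztilde) ha hb hab
      _ ≤ a * max (f w) (f ztilde) + b * max (f w) (f ztilde) := by
          gcongr
          · exact le_max_left _ _
          · exact le_max_right _ _
      _ = max (f w) (f ztilde) := by rw [← add_mul, hab, one_mul]
  have hmax : max (f w) (f ztilde) = f w :=
    max_eq_left (hz_min w hwT)
  calc f zstar ≤ f w := hmax ▸ hle
    _ ≤ f z := hwmin z hz
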